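/- Let F be a symmetric n×n matrix with eigenvalues μ_1, …, μ_n. Then lim_{T→∞} (1/(2T))·ln det(∑_{t=0}^{T} F^{2t}) = ∑_{i : |μ_i| > 1} ln|μ_i|. -/

import Mathlib

open Matrix Filter Finset

lemma pesin_aux (a : ℝ) (ha : 0 ≤ a) :
    Tendsto (fun T : ℕ => (1 / (2 * (T : ℝ))) * Real.log (∑ t ∈ Finset.range (T + 1), a ^ t))
      atTop (nhds ((1/2) * Real.log (max 1 a))) := by
  set m := max 1 a with hmdef
  have hm1 : (1:ℝ) ≤ m := le_max_left _ _
  have hm0 : (0:ℝ) < m := lt_of_lt_of_le one_pos hm1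
  have ham : a ≤ m := le_max_right _ _
  have hg_low : ∀ T : ℕ, m ^ T ≤ ∑ t ∈ Finset.range (T + 1), a ^ t := by
    intro T
    rcases le_or_gt a 1 with h | h
    · have hm : m = 1 := max_eq_left h
      rw [hm, one_pow]
      calc (1:ℝ) = a ^ 0 := (pow_zero a).symm
        _ ≤ _ := Finset.single_le_sum (f := fun t => a ^ t)
            (fun i _ => pow_nonneg ha i) (Finset.mem_range.mpr (Nat.succ_pos T))
    · have hm : m = a := max_eq_right h.le
      rw [hm]
      exact Finset.single_le_sum (f := fun t => a ^ t)
        (fun i _ => pow_nonneg ha i) (Finset.mem_range.mpr (Nat.lt_succ_self T))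
  have hg_high : ∀ T : ℕ, ∑ t ∈ Finset.range (T + 1), a ^ t ≤ (T + 1 : ℝ) * m ^ T := by
    intro T
    calc ∑ t ∈ Finset.range (T + 1), a ^ t ≤ ∑ _t ∈ Finset.range (T + 1), m ^ T := by
          refine Finset.sum_le_sum fun t ht => ?_
          calc a ^ t ≤ m ^ t := pow_le_pow_left₀ ha ham t
            _ ≤ m ^ T := pow_le_pow_right₀ hm1 (Nat.lt_succ_iff.mp (Finset.mem_range.mp ht))
      _ = (T + 1 : ℝ) * m ^ T := by
          rw [Finset.sum_const, Finset.card_range]; push_cast; ring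
  have hg_pos : ∀ T : ℕ, (0:ℝ) < ∑ t ∈ Finset.range (T + 1), a ^ t := fun T =>
    lt_of_lt_of_le (pow_pos hm0 T) (hg_low T)
  -- upper comparison function
  have h0 : Tendsto (fun T : ℕ => (1 / (2 * (T : ℝ))) * Real.log ((T : ℝ) + 1)) atTop (nhds 0) := by
    have h1 : Tendsto (fun x : ℝ => Real.log x / x) atTop (nhds 0) :=
      Real.isLittleO_log_id_atTop.tendsto_div_nhds_zero
    have h2 : Tendsto (fun T : ℕ => ((T : ℝ) + 1)) atTop atTop :=
      tendsto_atTop_add_const_right _ 1 tendsto_natCast_atTop_atTop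
    have h3 : Tendsto (fun T : ℕ => Real.log ((T:ℝ)+1) / ((T:ℝ)+1)) atTop (nhds 0) := h1.comp h2
    have h4 : Tendsto (fun T : ℕ => ((T:ℝ)+1) / (2 * (T:ℝ))) atTop (nhds (1/2 + 0)) := by
      have h5 : Tendsto (fun T : ℕ => 1/2 + (1/2) * (1/(T:ℝ))) atTop (nhds (1/2 + (1/2)*0)) :=
        tendsto_const_nhds.add (tendsto_one_div_atTop_nhds_zero_nat.const_mul _)
      rw [mul_zero] at h5
      refine h5.congr' ?_
      filter_upwards [eventually_ge_atTop 1] with T hT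
      have : (T:ℝ) ≠ 0 := by positivity
      field_simp
    have h6 := h3.mul h4
    rw [zero_mul] at h6
    refine h6.congr' ?_
    filter_upwards [eventually_ge_atTop 1] with T hT
    have hT0 : (T:ℝ) ≠ 0 := by
      have : (0:ℝ) < T := by exact_mod_cast hT
      positivity
    have hT1 : ((T:ℝ) + 1) ≠ 0 := by positivity
    field_simp
  have hupper : Tendsto (fun T : ℕ =>
      (1 / (2 * (T : ℝ))) * Real.log ((T : ℝ) + 1) + (1/2) * Real.log m) atTop
      (nhds (0 + (1/2) * Real.log m)) := h0.add tendsto_const_nhds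
  rw [zero_add] at hupper
  refine tendsto_of_tendsto_of_tendsto_of_le_of_le' (tendsto_const_nhds) hupper ?_ ?_
  · filter_upwards [eventually_ge_atTop 1] with T hT
    have hT0 : (0:ℝ) < T := by exact_mod_cast hT
    have hlog : Real.log (m ^ T) ≤ Real.log (∑ t ∈ Finset.range (T + 1), a ^ t) :=
      Real.log_le_log (pow_pos hm0 T) (hg_low T)
    rw [Real.log_pow] at hlog
    have hpos : (0:ℝ) < 1 / (2 * (T:ℝ)) := by positivity
    have := mul_le_mul_of_nonneg_left hlog hpos.le
    calc (1/2) * Real.log m = (1 / (2 * (T:ℝ))) * ((T:ℕ) * Real.log m) := by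
          field_simp
      _ ≤ _ := this
  · filter_upwards [eventually_ge_atTop 1] with T hT
    have hT0 : (0:ℝ) < T := by exact_mod_cast hT
    have hlog : Real.log (∑ t ∈ Finset.range (T + 1), a ^ t) ≤
        Real.log (((T:ℝ) + 1) * m ^ T) :=
      Real.log_le_log (hg_pos T) (hg_high T)
    rw [Real.log_mul (by positivity) (by positivity), Real.log_pow] at hlog
    have hpos : (0:ℝ) < 1 / (2 * (T:ℝ)) := by positivity
    have := mul_le_mul_of_nonneg_left hlog hpos.le
    calc (1 / (2 * (T:ℝ))) * Real.log (∑ t ∈ Finset.range (T + 1), a ^ t) ≤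
        (1 / (2 * (T:ℝ))) * (Real.log ((T:ℝ)+1) + (T:ℕ) * Real.log m) := this
      _ = (1 / (2 * (T:ℝ))) * Real.log ((T:ℝ)+1) + (1/2) * Real.log m := by
          field_simp

lemma conj_pow_aux {n : ℕ} (U D : Matrix (Fin n) (Fin n) ℝ)
    (hU : star U * U = 1) (k : ℕ) :
    (U * D * star U) ^ k = U * D ^ k * star U := by
  induction k with
  | zero =>
      have hU2 : U * star U = 1 := by
        exact mul_eq_one_comm.mpr hU
      simp [hU2]
  | succ k ih =>
      rw [pow_succ, ih, pow_succ]
      calc U * D ^ k * star U * (U * D * star U)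
          = U * D ^ k * (star U * U) * D * star U := by
            simp only [Matrix.mul_assoc]
        _ = U * (D ^ k * D) * star U := by rw [hU]; simp only [Matrix.mul_assoc, Matrix.mul_one]
        _ = _ := by simp only [Matrix.mul_assoc]

theorem pesin_type_formula {n : ℕ}
    (F : Matrix (Fin n) (Fin n) ℝ) (hF : F.IsHermitian) :
    Tendsto (fun T : ℕ =>
        (1 / (2 * (T : ℝ))) *
          Real.log (∑ t ∈ Finset.range (T + 1), F ^ (2 * t)).det)
      atTop
      (nhds (∑ i ∈ Finset.univ.filter (fun i => 1 < |hF.eigenvalues i|),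
        Real.log |hF.eigenvalues i|)) := by
  classical
  set μ := hF.eigenvalues with hμ
  set U : Matrix (Fin n) (Fin n) ℝ := (hF.eigenvectorUnitary : Matrix (Fin n) (Fin n) ℝ) with hUdef
  have hU : star U * U = 1 := Matrix.mem_unitaryGroup_iff'.mp hF.eigenvectorUnitary.2
  have hU2 : U * star U = 1 := Matrix.mem_unitaryGroup_iff.mp hF.eigenvectorUnitary.2
  have hspec : F = U * Matrix.diagonal (RCLike.ofReal ∘ μ) * star U := hF.spectral_theorem
  have hD : Matrix.diagonal (RCLike.ofReal ∘ μ) = Matrix.diagonal μ := by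
    congr 1
  -- determinant identity
  have hdet : ∀ T : ℕ, (∑ t ∈ Finset.range (T + 1), F ^ (2 * t)).det
      = ∏ i, ∑ t ∈ Finset.range (T + 1), (μ i ^ 2) ^ t := by
    intro T
    have h1 : ∑ t ∈ Finset.range (T + 1), F ^ (2 * t)
        = U * (∑ t ∈ Finset.range (T + 1), (Matrix.diagonal μ) ^ (2 * t)) * star U := by
      rw [Finset.mul_sum, Finset.sum_mul]
      refine Finset.sum_congr rfl fun t _ => ?_
      rw [hspec, hD, conj_pow_aux U _ hU]
    rw [h1, Matrix.det_mul, Matrix.det_mul, mul_comm, ← mul_assoc, ← Matrix.det_mul, hU, 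
      Matrix.det_one, one_mul]
    have h2 : ∑ t ∈ Finset.range (T + 1), (Matrix.diagonal μ) ^ (2 * t)
        = Matrix.diagonal (fun i => ∑ t ∈ Finset.range (T + 1), (μ i) ^ (2 * t)) := by
      rw [Finset.sum_congr rfl fun t _ => Matrix.diagonal_pow μ (2 * t)]
      ext i j
      by_cases h : i = j <;> simp [Matrix.sum_apply, Matrix.diagonal_apply, h]
    rw [h2, Matrix.det_diagonal]
    refine Finset.prod_congr rfl fun i _ => Finset.sum_congr rfl fun t _ => ?_
    rw [← pow_mul]
  have hsum_pos : ∀ (i : Fin n) (T : ℕ), (0:ℝ) < ∑ t ∈ Finset.range (T+1), (μ i ^ 2) ^ t := by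
    intro i T
    calc (0:ℝ) < 1 := one_pos
      _ = (μ i ^ 2) ^ 0 := (pow_zero _).symm
      _ ≤ _ := Finset.single_le_sum (f := fun t => (μ i ^ 2) ^ t)
          (fun t _ => pow_nonneg (sq_nonneg _) t) (Finset.mem_range.mpr (Nat.succ_pos T))
  have hmain : Tendsto (fun T : ℕ => ∑ i, (1 / (2 * (T:ℝ))) *
      Real.log (∑ t ∈ Finset.range (T+1), (μ i ^ 2) ^ t)) atTop
      (nhds (∑ i, (1/2) * Real.log (max 1 (μ i ^ 2)))) :=
    tendsto_finset_sum _ (fun i _ => pesin_aux (μ i ^ 2) (sq_nonneg _))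
  have hval : (∑ i ∈ Finset.univ.filter (fun i => 1 < |hF.eigenvalues i|),
      Real.log |hF.eigenvalues i|) = ∑ i, (1/2) * Real.log (max 1 (μ i ^ 2)) := by
    rw [Finset.sum_filter]
    refine Finset.sum_congr rfl fun i _ => ?_
    rcases lt_or_ge 1 |μ i| with h | h
    · rw [if_pos h]
      have h2 : (1:ℝ) < μ i ^ 2 := by
        have hs := sq_abs (μ i)
        nlinarith
      rw [max_eq_right h2.le, ← sq_abs, Real.log_pow]
      push_cast
      ring
    · rw [if_neg (not_lt.mpr h)]
      have h2 : μ i ^ 2 ≤ 1 := by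
        have hs := sq_abs (μ i)
        nlinarith [abs_nonneg (μ i)]
      rw [max_eq_left h2, Real.log_one, mul_zero]
  rw [hval]
  refine hmain.congr fun T => ?_
  rw [hdet T, Real.log_prod (fun i _ => (hsum_pos i T).ne'), Finset.mul_sum]
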